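/- Let α > β > γ > 0 be reals and let E = {(x,y,z) ∈ ℝ³ : x²/α + y²/β + z²/γ = 1}. Fix a sign ε ∈ {1,−1} and μ ∈ ℝ with μ² < (α−γ)/β, and let Π = {(x,y,z) ∈ ℝ³ : √(1/β − 1/α)·x + ε·√(1/γ − 1/β)·z = μ}. Then the intersection E ∩ Π is a circle of positive radius: there exist a point c ∈ Π and a real R > 0 such that E ∩ Π = {p ∈ Π : ‖p − c‖ = R}. -/

import Mathlib

open Real

theorem circular_cross_section_is_circle
    (α β γ : ℝ) (hαβ : β < α) (hβγ : γ < β) (hγ : 0 < γ)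
    (ε : ℝ) (hε : ε = 1 ∨ ε = -1)
    (μ : ℝ) (hμ : μ ^ 2 < (α - γ) / β)
    (E P : Set (EuclideanSpace ℝ (Fin 3)))
    (hE : E = {p | (p 0) ^ 2 / α + (p 1) ^ 2 / β + (p 2) ^ 2 / γ = 1})
    (hP : P = {p | Real.sqrt (1 / β - 1 / α) * p 0
        + ε * Real.sqrt (1 / γ - 1 / β) * p 2 = μ}) :
    ∃ c ∈ P, ∃ R : ℝ, 0 < R ∧ E ∩ P = {p ∈ P | ‖p - c‖ = R} := by
  have hβ : 0 < β := hγ.trans hβγ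
  have hα' : 0 < α := hβ.trans hαβ
  have hαγ : 0 < α - γ := by linarith
  have hε2 : ε ^ 2 = 1 := by rcases hε with h | h <;> rw [h] <;> norm_num
  obtain ⟨a, ha2, ha_def⟩ : ∃ a : ℝ, a ^ 2 = 1 / β - 1 / α ∧ Real.sqrt (1 / β - 1 / α) = a :=
    ⟨_, Real.sq_sqrt (by rw [sub_nonneg]; exact one_div_le_one_div_of_le hβ hαβ.le), rfl⟩
  obtain ⟨b, hb2, hb_def⟩ : ∃ b : ℝ, b ^ 2 = 1 / γ - 1 / β ∧ Real.sqrt (1 / γ - 1 / β) = b :=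
    ⟨_, Real.sq_sqrt (by rw [sub_nonneg]; exact one_div_le_one_div_of_le hγ hβγ.le), rfl⟩
  have ha2' : a ^ 2 * α * β = α - β := by
    rw [ha2]; field_simp
  have hb2' : b ^ 2 * β * γ = β - γ := by
    rw [hb2]; field_simp
  set t : ℝ := μ * β * γ / (α - γ) with ht
  set c0 : ℝ := a * μ * α * β / (α - γ) with hc0
  set c2 : ℝ := ε * b * t with hc2
  set K : ℝ := β * (1 - β * μ ^ 2 / (α - γ)) with hK
  have hKpos : 0 < K := by
    have h1 : μ ^ 2 * β < α - γ := (lt_div_iff₀ hβ).mp hμ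
    have h2 : β * μ ^ 2 / (α - γ) < 1 := (div_lt_one hαγ).mpr (by nlinarith)
    rw [hK]; nlinarith
  set R : ℝ := Real.sqrt K with hR
  have hRpos : 0 < R := Real.sqrt_pos.mpr hKpos
  have hRsq : R ^ 2 = K := Real.sq_sqrt hKpos.le
  set c : EuclideanSpace ℝ (Fin 3) := !₂[c0, 0, c2] with hc
  have hcval0 : c 0 = c0 := rfl
  have hcval1 : c 1 = 0 := rfl
  have hcval2 : c 2 = c2 := rfl
  have hcP : c ∈ P := by
    rw [hP]
    simp only [Set.mem_setOf_eq, ha_def, hb_def, hcval0, hcval2]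
    rw [hc0, hc2, ht]
    field_simp
    linear_combination μ * ha2' + μ * hb2' + μ * b ^ 2 * β * γ * hε2
  refine ⟨c, hcP, R, hRpos, ?_⟩
  rw [hE, hP]
  ext p
  simp only [Set.mem_inter_iff, Set.mem_setOf_eq, ha_def, hb_def]
  set x := p 0 with hx
  set y := p 1 with hy
  set z := p 2 with hz
  have hnorm : ‖p - c‖ = Real.sqrt ((x - c0) ^ 2 + y ^ 2 + (z - c2) ^ 2) := by
    rw [EuclideanSpace.norm_eq]
    congr 1
    simp [Fin.sum_univ_three, hcval0, hcval1, hcval2, ← hx, ← hy, ← hz, sq_abs]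
  have hiff2 : ∀ q : Prop, (a * x + ε * b * z = μ) →
      ((x - c0) ^ 2 + y ^ 2 + (z - c2) ^ 2 = K ↔ x ^ 2 / α + y ^ 2 / β + z ^ 2 / γ = 1) := by
    intro q hpl
    have hbz : b * z = ε * (μ - a * x) := by linear_combination ε * hpl - b * z * hε2
    have hbz2 : b ^ 2 * z ^ 2 = (μ - a * x) ^ 2 := by
      have h := congrArg (· ^ 2) hbz
      simp only [mul_pow] at h
      rw [hε2, one_mul] at h
      linear_combination h
    have hiα : (1 : ℝ) / α = 1 / β - a ^ 2 := by rw [ha2]; ring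
    have hiγ : (1 : ℝ) / γ = 1 / β + b ^ 2 := by rw [hb2]; ring
    have h1 : β * (x ^ 2 / α + y ^ 2 / β + z ^ 2 / γ) =
        x ^ 2 + y ^ 2 + z ^ 2 + β * μ ^ 2 - 2 * β * a * μ * x := by
      calc β * (x ^ 2 / α + y ^ 2 / β + z ^ 2 / γ)
          = β * (x ^ 2 * (1 / α) + y ^ 2 * (1 / β) + z ^ 2 * (1 / γ)) := by ring
        _ = β * (x ^ 2 * (1 / β - a ^ 2) + y ^ 2 * (1 / β) + z ^ 2 * (1 / β + b ^ 2)) := by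
            rw [hiα, hiγ]
        _ = (β * (1 / β)) * (x ^ 2 + y ^ 2 + z ^ 2) + β * (b ^ 2 * z ^ 2)
              - β * a ^ 2 * x ^ 2 := by ring
        _ = x ^ 2 + y ^ 2 + z ^ 2 + β * μ ^ 2 - 2 * β * a * μ * x := by
            rw [hbz2, mul_one_div_cancel hβ.ne']; ring
    have hc2z : c2 * z = t * (μ - a * x) := by
      calc c2 * z = t * ε * (b * z) := by rw [hc2]; ring
        _ = t * ε ^ 2 * (μ - a * x) := by rw [hbz]; ring
        _ = t * (μ - a * x) := by rw [hε2]; ring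
    have hcoef : μ * α * β / (α - γ) - t = μ * β := by
      rw [ht]; field_simp
    have h2 : (x - c0) ^ 2 + y ^ 2 + (z - c2) ^ 2 =
        x ^ 2 + y ^ 2 + z ^ 2 - 2 * β * a * μ * x - 2 * t * μ
          + (a ^ 2 * (μ * α * β / (α - γ)) ^ 2 + b ^ 2 * t ^ 2) := by
      calc (x - c0) ^ 2 + y ^ 2 + (z - c2) ^ 2
          = x ^ 2 + y ^ 2 + z ^ 2 - 2 * ((μ * α * β / (α - γ)) * (a * x)) - 2 * (c2 * z)
              + a ^ 2 * (μ * α * β / (α - γ)) ^ 2 + ε ^ 2 * (b ^ 2 * t ^ 2) := by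
            rw [hc0, hc2]; ring
        _ = x ^ 2 + y ^ 2 + z ^ 2 - 2 * ((μ * α * β / (α - γ)) * (a * x))
              - 2 * (t * (μ - a * x)) + a ^ 2 * (μ * α * β / (α - γ)) ^ 2
              + b ^ 2 * t ^ 2 := by rw [hc2z, hε2]; ring
        _ = x ^ 2 + y ^ 2 + z ^ 2 - 2 * (a * x) * (μ * α * β / (α - γ) - t) - 2 * t * μ
              + (a ^ 2 * (μ * α * β / (α - γ)) ^ 2 + b ^ 2 * t ^ 2) := by ring
        _ = _ := by rw [hcoef]; ring
    have hnum : β - β * μ ^ 2 - 2 * t * μ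
        + (a ^ 2 * (μ * α * β / (α - γ)) ^ 2 + b ^ 2 * t ^ 2) = K := by
      rw [ht, hK, ha2, hb2]
      field_simp
      ring
    constructor
    · intro hS
      have hb1 : β * (x ^ 2 / α + y ^ 2 / β + z ^ 2 / γ) = β * 1 := by
        rw [h1, mul_one]
        rw [h2] at hS
        linarith
      exact mul_left_cancel₀ hβ.ne' hb1
    · intro hell
      have hb1 : β * (x ^ 2 / α + y ^ 2 / β + z ^ 2 / γ) = β := by rw [hell, mul_one]
      rw [h1] at hb1
      rw [h2]
      linarith
  constructor
  · rintro ⟨hell, hpl⟩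
    refine ⟨hpl, ?_⟩
    rw [hnorm, hR, Real.sqrt_inj (by positivity) hKpos.le]
    exact (hiff2 True hpl).mpr hell
  · rintro ⟨hpl, hsph⟩
    rw [hnorm, hR, Real.sqrt_inj (by positivity) hKpos.le] at hsph
    exact ⟨(hiff2 True hpl).mp hsph, hpl⟩
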